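/- Let X1 and X2 be independent nonnegative random variables, each taking values in the set {(1+δ)^r : r ∈ ℤ_{≥0}} of integer powers of (1+δ), and let X = Round_δ(X1 + X2), where the rounding is performed conditionally on the value of X1 + X2 and independently of everything else. Then E[X] = E[X1] + E[X2] and Var(X) ≤ Var(X1) + Var(X2) + δ·E[X1]·E[X2]. -/

import Mathlib

open MeasureTheory ProbabilityTheory
open scoped ENNReal

/-- `⌊log_{1+δ} y⌋` as a natural number (for `y ≥ 1` the logarithm is nonnegative). -/
noncomputable def rExp (δ y : ℝ) : ℕ := ⌊Real.logb (1 + δ) y⌋₊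

/-- `⌊y⌋_δ = (1+δ)^{⌊log_{1+δ} y⌋}`. -/
noncomputable def rfloor (δ y : ℝ) : ℝ := (1 + δ) ^ rExp δ y

/-- `⌈y⌉_δ = (1+δ)^{⌈log_{1+δ} y⌉}`. -/
noncomputable def rceil (δ y : ℝ) : ℝ := (1 + δ) ^ (⌈Real.logb (1 + δ) y⌉₊)

/-- The probability `k / (δ(1+δ)^r)` (where `y = (1+δ)^r + k`) that the randomized
rounding rounds up. -/
noncomputable def roundUpProb (δ y : ℝ) : ℝ≥0∞ :=
  ENNReal.ofReal ((y - rfloor δ y) / (δ * rfloor δ y))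

/-- The randomized rounding `Round_δ(y)`: equal to `(1+δ)^r` with probability
`(δ(1+δ)^r − k)/(δ(1+δ)^r)` and to `(1+δ)^{r+1}` with probability `k/(δ(1+δ)^r)`,
where `y = (1+δ)^r + k`, `r = ⌊log_{1+δ} y⌋` and `k ∈ [0, δ(1+δ)^r)`.
(For `δ > 0` and `y ≥ 1` the probability `k/(δ(1+δ)^r)` lies in `[0,1)`, so the
clamping `min · 1` below is vacuous.) -/
noncomputable def roundPMF (δ y : ℝ) : PMF ℝ :=
  (PMF.bernoulli (min (roundUpProb δ y).toNNReal 1) (min_le_right _ _)).map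
    (fun b => if b then (1 + δ) ^ (rExp δ y + 1) else rfloor δ y)

/-- Expectation of a real-valued probability mass function. -/
noncomputable def pmfExp (p : PMF ℝ) : ℝ := ∫ x, x ∂p.toMeasure

/-- Variance of a real-valued probability mass function. -/
noncomputable def pmfVar (p : PMF ℝ) : ℝ := variance (fun x => x) p.toMeasure

section Aux

variable {δ : ℝ}

lemma rfloor_pos (hδ : 0 < δ) (y : ℝ) : 0 < rfloor δ y := pow_pos (by linarith) _

lemma rfloor_le (hδ : 0 < δ) {y : ℝ} (hy : 1 ≤ y) : rfloor δ y ≤ y := by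
  have hb : (1:ℝ) < 1 + δ := by linarith
  calc rfloor δ y = (1+δ) ^ ((rExp δ y : ℝ)) := by rw [Real.rpow_natCast]; rfl
  _ ≤ (1+δ) ^ Real.logb (1+δ) y :=
      Real.rpow_le_rpow_of_exponent_le hb.le (Nat.floor_le (Real.logb_nonneg hb hy))
  _ = y := Real.rpow_logb (by linarith) hb.ne' (by linarith)

lemma lt_rfloor_mul (hδ : 0 < δ) {y : ℝ} (hy : 1 ≤ y) : y < (1 + δ) * rfloor δ y := by
  have hb : (1:ℝ) < 1 + δ := by linarith
  calc y = (1+δ) ^ Real.logb (1+δ) y := (Real.rpow_logb (by linarith) hb.ne' (by linarith)).symm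
  _ < (1+δ) ^ (((rExp δ y + 1 : ℕ)) : ℝ) := by
      apply Real.rpow_lt_rpow_of_exponent_lt hb
      push_cast
      exact Nat.lt_floor_add_one _
  _ = (1 + δ) * rfloor δ y := by
      rw [Real.rpow_natCast, pow_succ, mul_comm]; rfl

lemma pow_le_rfloor (hδ : 0 < δ) {y : ℝ} {m : ℕ} (h : (1+δ)^m ≤ y) :
    (1+δ)^m ≤ rfloor δ y := by
  have hb : (1:ℝ) < 1 + δ := by linarith
  have hy : (0:ℝ) < y := lt_of_lt_of_le (pow_pos (by linarith) m) h
  have hm : (m:ℝ) ≤ Real.logb (1+δ) y := by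
    rw [Real.le_logb_iff_rpow_le hb hy, Real.rpow_natCast]; exact h
  exact pow_le_pow_right₀ hb.le (Nat.le_floor hm)

lemma one_le_pow_base (hδ : 0 < δ) (r : ℕ) : (1:ℝ) ≤ (1+δ)^r :=
  one_le_pow₀ (by linarith)

lemma key'' (hδ : 0 < δ) {a b L : ℝ} (ha1 : 1 ≤ a) (hb1 : 1 ≤ b) (hab : a ≤ b)
    (hLy : L ≤ a + b) (hL2 : (1+δ)*b ≤ L) :
    (a + b - L) * (δ * L - (a + b - L)) ≤ δ * a * b := by
  have hdba : δ * b ≤ a := by linarith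
  have h1 : (a + b - L) * (δ * L - (a+b-L)) ≤ (δ*L)^2/4 := by
    nlinarith [sq_nonneg (δ*L - 2*(a+b-L))]
  have hL0 : (0:ℝ) ≤ L := by nlinarith
  have h2 : (δ*L)^2 ≤ (δ*(a+b))^2 := by
    nlinarith [mul_le_mul hLy hLy hL0 (by linarith : (0:ℝ) ≤ a + b), sq_nonneg δ]
  have h4 : (a+b)^2 ≤ 4*b^2 := by nlinarith
  have h5 : δ*b^2 ≤ a*b := by nlinarith
  have h3 : (δ*(a+b))^2/4 ≤ δ * a * b := by
    nlinarith [mul_le_mul_of_nonneg_left h4 (sq_nonneg δ),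
      mul_le_mul_of_nonneg_left h5 (by positivity : (0:ℝ) ≤ 4*δ)]
  linarith

lemma key' (hδ : 0 < δ) {a b : ℝ} (ha : ∃ r : ℕ, a = (1+δ)^r) (hb : ∃ r : ℕ, b = (1+δ)^r)
    (hab : a ≤ b) :
    (a + b - rfloor δ (a+b)) * (δ * rfloor δ (a+b) - (a + b - rfloor δ (a+b))) ≤ δ * a * b := by
  obtain ⟨r1, ha⟩ := ha
  obtain ⟨r2, hb⟩ := hb
  have hbgt : (1:ℝ) < 1 + δ := by linarith
  have ha1 : (1:ℝ) ≤ a := ha ▸ one_le_pow_base hδ r1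
  have hb1 : (1:ℝ) ≤ b := hb ▸ one_le_pow_base hδ r2
  have hy1 : (1:ℝ) ≤ a + b := by linarith
  have hbley : (1+δ)^r2 ≤ a + b := by rw [← hb]; linarith
  have hbL : b ≤ rfloor δ (a+b) := hb.le.trans (pow_le_rfloor hδ hbley)
  have hLy : rfloor δ (a+b) ≤ a + b := rfloor_le hδ hy1
  have hLpos : (0:ℝ) < rfloor δ (a+b) := rfloor_pos hδ (a+b)
  have hr2 : r2 ≤ rExp δ (a+b) := by
    have h : (1+δ)^r2 ≤ (1+δ)^(rExp δ (a+b)) := hb.ge.trans hbL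
    exact (pow_le_pow_iff_right₀ hbgt).mp h
  rcases eq_or_lt_of_le hr2 with heq | hlt
  · have hLb : rfloor δ (a+b) = b := by rw [rfloor, ← heq, ← hb]
    rw [hLb]
    nlinarith [sq_nonneg a]
  · have hL2 : (1+δ) * b ≤ rfloor δ (a+b) := by
      have h : (1+δ)^(r2+1) ≤ (1+δ)^(rExp δ (a+b)) := pow_le_pow_right₀ hbgt.le hlt
      calc (1+δ) * b = (1+δ)^(r2+1) := by rw [pow_succ, hb]; ring
      _ ≤ rfloor δ (a+b) := h
    exact key'' hδ ha1 hb1 hab hLy hL2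

lemma key (hδ : 0 < δ) {a b : ℝ} (ha : ∃ r : ℕ, a = (1+δ)^r) (hb : ∃ r : ℕ, b = (1+δ)^r) :
    (a + b - rfloor δ (a+b)) * (δ * rfloor δ (a+b) - (a + b - rfloor δ (a+b))) ≤ δ * a * b := by
  rcases le_total a b with h | h
  · exact key' hδ ha hb h
  · have := key' hδ hb ha h
    rw [add_comm b a] at this
    linarith [this]

lemma roundPMF_support (δ y : ℝ) :
    (roundPMF δ y).support ⊆ {rfloor δ y, (1+δ) * rfloor δ y} := by
  intro x hx
  rw [roundPMF, PMF.support_map] at hx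
  obtain ⟨c, -, rfl⟩ := hx
  cases c
  · exact Or.inl rfl
  · right
    show (1+δ)^(rExp δ y + 1) = (1+δ) * rfloor δ y
    rw [pow_succ, rfloor, mul_comm]

lemma roundPMF_integral (hδ : 0 < δ) {y : ℝ} (hy : 1 ≤ y) {f : ℝ → ℝ} (hf : Measurable f) :
    ∫ x, f x ∂(roundPMF δ y).toMeasure =
      (1 - (y - rfloor δ y) / (δ * rfloor δ y)) * f (rfloor δ y)
      + (y - rfloor δ y) / (δ * rfloor δ y) * f ((1 + δ) * rfloor δ y) := by
  set q : ℝ := (y - rfloor δ y) / (δ * rfloor δ y) with hq_def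
  have hLpos := rfloor_pos hδ y
  have hLle := rfloor_le hδ hy
  have hLlt := lt_rfloor_mul hδ hy
  have hq0 : 0 ≤ q := div_nonneg (by linarith) (by positivity)
  have hq1 : q < 1 := by
    rw [hq_def, div_lt_one (by positivity)]
    nlinarith
  have hmin : min (roundUpProb δ y).toNNReal 1 = q.toNNReal := by
    rw [roundUpProb, ENNReal.ofReal, ENNReal.toNNReal_coe, min_eq_left (Real.toNNReal_le_one.mpr hq1.le)]
  have hg : Measurable (fun b : Bool => if b then (1 + δ) ^ (rExp δ y + 1) else rfloor δ y) :=
    measurable_of_countable _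
  have hmap : (roundPMF δ y).toMeasure
      = (PMF.bernoulli (min (roundUpProb δ y).toNNReal 1) (min_le_right _ _)).toMeasure.map
        (fun b : Bool => if b then (1 + δ) ^ (rExp δ y + 1) else rfloor δ y) :=
    (PMF.toMeasure_map _ _ hg).symm
  rw [hmap, integral_map hg.aemeasurable hf.aestronglyMeasurable]
  rw [integral_fintype Integrable.of_finite]
  rw [Fintype.sum_bool, measureReal_def, measureReal_def]
  have htrue : ((PMF.bernoulli (min (roundUpProb δ y).toNNReal 1) (min_le_right _ _)).toMeasure
      {true}).toReal = q := by
    rw [PMF.toMeasure_apply_singleton _ _ (measurableSet_singleton _), PMF.bernoulli_apply,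
      hmin]
    simp [Real.coe_toNNReal _ hq0]
  have hfalse : ((PMF.bernoulli (min (roundUpProb δ y).toNNReal 1) (min_le_right _ _)).toMeasure
      {false}).toReal = 1 - q := by
    rw [PMF.toMeasure_apply_singleton _ _ (measurableSet_singleton _), PMF.bernoulli_apply,
      hmin]
    simp only [Bool.cond_false]
    rw [ENNReal.coe_toReal, NNReal.coe_sub (Real.toNNReal_le_one.mpr hq1.le), NNReal.coe_one,
      Real.coe_toNNReal _ hq0]
  rw [htrue, hfalse]
  have : (1+δ)^(rExp δ y + 1) = (1+δ) * rfloor δ y := by rw [pow_succ, rfloor, mul_comm]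
  simp [this]
  ring

lemma roundPMF_exp (hδ : 0 < δ) {y : ℝ} (hy : 1 ≤ y) :
    ∫ x, x ∂(roundPMF δ y).toMeasure = y := by
  rw [roundPMF_integral hδ hy measurable_id']
  have hLpos := rfloor_pos hδ y
  field_simp
  ring

lemma roundPMF_sq (hδ : 0 < δ) {y : ℝ} (hy : 1 ≤ y) :
    ∫ x, x^2 ∂(roundPMF δ y).toMeasure
      = y^2 + (y - rfloor δ y) * (δ * rfloor δ y - (y - rfloor δ y)) := by
  rw [roundPMF_integral hδ hy (measurable_id'.pow_const 2)]
  have hLpos := rfloor_pos hδ y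
  field_simp
  ring

lemma pmf_ae_mem (p : PMF ℝ) {s : Finset ℝ} (hs : p.support ⊆ ↑s) :
    ∀ᵐ x ∂p.toMeasure, x ∈ (↑s : Set ℝ) := by
  rw [ae_iff]
  have h : {x : ℝ | ¬ x ∈ (↑s : Set ℝ)} = (↑s : Set ℝ)ᶜ := rfl
  rw [h, PMF.toMeasure_apply_eq_zero_iff _ s.measurableSet.compl]
  exact disjoint_compl_right.mono_left hs

lemma pmf_integrable (p : PMF ℝ) {s : Finset ℝ} (hs : p.support ⊆ ↑s) {f : ℝ → ℝ}
    (hf : Measurable f) : Integrable f p.toMeasure := by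
  refine Integrable.mono' (integrable_const (∑ z ∈ s, ‖f z‖)) hf.aestronglyMeasurable ?_
  filter_upwards [pmf_ae_mem p hs] with x hx
  exact Finset.single_le_sum (f := fun z => ‖f z‖) (fun z _ => norm_nonneg _) hx

lemma pmf_integral_finset (p : PMF ℝ) {s : Finset ℝ} (hs : p.support ⊆ ↑s) {f : ℝ → ℝ}
    (hf : Measurable f) :
    ∫ x, f x ∂p.toMeasure = ∑ x ∈ s, (p x).toReal * f x := by
  have h1 : ∫ x, f x ∂p.toMeasure = ∫ x in (↑s : Set ℝ), f x ∂p.toMeasure := by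
    refine (setIntegral_eq_integral_of_ae_compl_eq_zero ?_).symm
    filter_upwards [pmf_ae_mem p hs] with x hx h
    exact absurd hx h
  rw [h1, integral_finset _ ((pmf_integrable p hs hf).integrableOn)]
  refine Finset.sum_congr rfl fun x _ => ?_
  rw [measureReal_def, PMF.toMeasure_apply_singleton _ _ (measurableSet_singleton _), smul_eq_mul]

lemma pmf_sum_one (p : PMF ℝ) {s : Finset ℝ} (hs : p.support ⊆ ↑s) :
    ∑ x ∈ s, (p x).toReal = 1 := by
  have h := pmf_integral_finset p hs (f := fun _ => (1:ℝ)) measurable_const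
  simpa using h.symm

lemma pmf_var_eq (p : PMF ℝ) {s : Finset ℝ} (hs : p.support ⊆ ↑s) :
    pmfVar p = (∫ x, x^2 ∂p.toMeasure) - (pmfExp p)^2 := by
  have hmem : MemLp (fun x : ℝ => x) 2 p.toMeasure := by
    refine MemLp.of_bound measurable_id.aestronglyMeasurable (∑ z ∈ s, ‖z‖) ?_
    filter_upwards [pmf_ae_mem p hs] with x hx
    exact Finset.single_le_sum (f := fun z => ‖z‖) (fun z _ => norm_nonneg _) hx
  have h := variance_eq_sub hmem
  simpa [pmfVar, pmfExp, Pi.pow_apply] using h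

lemma pmf_bind_apply_finset (p : PMF ℝ) (g : ℝ → PMF ℝ) {s : Finset ℝ}
    (hs : p.support ⊆ ↑s) (x : ℝ) :
    (p.bind g) x = ∑ a ∈ s, p a * g a x := by
  rw [PMF.bind_apply]
  exact tsum_eq_sum (fun a ha => by
    rw [(p.apply_eq_zero_iff a).2 (fun h => ha (hs h)), zero_mul])

lemma pmf_integral_bind (p : PMF ℝ) (g : ℝ → PMF ℝ) {s t : Finset ℝ}
    (hs : p.support ⊆ ↑s) (ht : ∀ a ∈ s, (g a).support ⊆ ↑t)
    {f : ℝ → ℝ} (hf : Measurable f) :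
    ∫ x, f x ∂(p.bind g).toMeasure = ∑ a ∈ s, (p a).toReal * ∫ x, f x ∂(g a).toMeasure := by
  have hsupp : (p.bind g).support ⊆ ↑t := by
    rw [PMF.support_bind]
    intro x hx
    simp only [Set.mem_iUnion] at hx
    obtain ⟨a, ha, hxa⟩ := hx
    exact ht a (hs ha) hxa
  rw [pmf_integral_finset _ hsupp hf]
  have hgs : ∀ a ∈ s, ∫ x, f x ∂(g a).toMeasure = ∑ x ∈ t, ((g a) x).toReal * f x :=
    fun a ha => pmf_integral_finset _ (ht a ha) hf
  calc ∑ x ∈ t, ((p.bind g) x).toReal * f x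
      = ∑ x ∈ t, ∑ a ∈ s, (p a).toReal * (((g a) x).toReal * f x) := by
        refine Finset.sum_congr rfl fun x _ => ?_
        rw [pmf_bind_apply_finset p g hs x, ENNReal.toReal_sum
          (fun a _ => ENNReal.mul_ne_top (PMF.apply_ne_top p a) (PMF.apply_ne_top (g a) x)),
          Finset.sum_mul]
        refine Finset.sum_congr rfl fun a _ => ?_
        rw [ENNReal.toReal_mul, mul_assoc]
    _ = ∑ a ∈ s, (p a).toReal * ∑ x ∈ t, ((g a) x).toReal * f x := by
        rw [Finset.sum_comm]
        exact Finset.sum_congr rfl fun a _ => (Finset.mul_sum _ _ _).symm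
    _ = ∑ a ∈ s, (p a).toReal * ∫ x, f x ∂(g a).toMeasure := by
        exact Finset.sum_congr rfl fun a ha => by rw [hgs a ha]

end Aux

/-- Let `X1` and `X2` be independent (finitely supported) nonnegative
random variables, each taking values in the set `{(1+δ)^r : r ∈ ℤ≥0}` of integer powers of
`(1+δ)`, and let `X = Round_δ(X1 + X2)`, the rounding performed conditionally on the value
of `X1 + X2` and independently of everything else (here modelled by the distribution
`p1.bind fun a => p2.bind fun b => roundPMF δ (a + b)` of `X`). Then
`E[X] = E[X1] + E[X2]` and `Var(X) ≤ Var(X1) + Var(X2) + δ·E[X1]·E[X2]`. -/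
theorem round_sum_exp_var (δ : ℝ) (hδ : 0 < δ) (p1 p2 : PMF ℝ)
    (hfin1 : p1.support.Finite) (hfin2 : p2.support.Finite)
    (hpow1 : ∀ x ∈ p1.support, ∃ r : ℕ, x = (1 + δ) ^ r)
    (hpow2 : ∀ x ∈ p2.support, ∃ r : ℕ, x = (1 + δ) ^ r) :
    pmfExp (p1.bind fun a => p2.bind fun b => roundPMF δ (a + b)) =
      pmfExp p1 + pmfExp p2 ∧
    pmfVar (p1.bind fun a => p2.bind fun b => roundPMF δ (a + b)) ≤
      pmfVar p1 + pmfVar p2 + δ * pmfExp p1 * pmfExp p2 := by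
  classical
  set s1 : Finset ℝ := hfin1.toFinset with hs1_def
  set s2 : Finset ℝ := hfin2.toFinset with hs2_def
  have hs1 : p1.support ⊆ ↑s1 := by rw [hs1_def, Set.Finite.coe_toFinset]
  have hs2 : p2.support ⊆ ↑s2 := by rw [hs2_def, Set.Finite.coe_toFinset]
  have hmem1 : ∀ a ∈ s1, ∃ r : ℕ, a = (1 + δ) ^ r := fun a ha =>
    hpow1 a (hfin1.mem_toFinset.mp ha)
  have hmem2 : ∀ b ∈ s2, ∃ r : ℕ, b = (1 + δ) ^ r := fun b hb =>
    hpow2 b (hfin2.mem_toFinset.mp hb)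
  have h1le : ∀ a ∈ s1, (1:ℝ) ≤ a := fun a ha => by
    obtain ⟨r, rfl⟩ := hmem1 a ha; exact one_le_pow_base hδ r
  have h2le : ∀ b ∈ s2, (1:ℝ) ≤ b := fun b hb => by
    obtain ⟨r, rfl⟩ := hmem2 b hb; exact one_le_pow_base hδ r
  set T : Finset ℝ :=
    ((s1 ×ˢ s2).image fun ab => rfloor δ (ab.1 + ab.2)) ∪
    ((s1 ×ˢ s2).image fun ab => (1+δ) * rfloor δ (ab.1 + ab.2)) with hT_def
  have hpair : ∀ a ∈ s1, ∀ b ∈ s2, (roundPMF δ (a+b)).support ⊆ ↑T := by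
    intro a ha b hb x hx
    rcases roundPMF_support δ (a+b) hx with h | h
    · refine Finset.mem_coe.mpr (Finset.mem_union_left _ (Finset.mem_image.mpr ?_))
      exact ⟨(a, b), Finset.mem_product.mpr ⟨ha, hb⟩, h.symm⟩
    · refine Finset.mem_coe.mpr (Finset.mem_union_right _ (Finset.mem_image.mpr ?_))
      exact ⟨(a, b), Finset.mem_product.mpr ⟨ha, hb⟩, h.symm⟩
  have hTa : ∀ a ∈ s1, (p2.bind fun b => roundPMF δ (a + b)).support ⊆ ↑T := by
    intro a ha
    rw [PMF.support_bind]
    intro x hx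
    simp only [Set.mem_iUnion] at hx
    obtain ⟨b, hb, hxb⟩ := hx
    exact hpair a ha b (hs2 hb) hxb
  have hTsupp : (p1.bind fun a => p2.bind fun b => roundPMF δ (a + b)).support ⊆ ↑T := by
    rw [PMF.support_bind]
    intro x hx
    simp only [Set.mem_iUnion] at hx
    obtain ⟨a, ha, hxa⟩ := hx
    exact hTa a (hs1 ha) hxa
  -- basic sums
  have hone1 : ∑ a ∈ s1, (p1 a).toReal = 1 := pmf_sum_one p1 hs1
  have hone2 : ∑ b ∈ s2, (p2 b).toReal = 1 := pmf_sum_one p2 hs2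
  have hE1 : ∑ a ∈ s1, (p1 a).toReal * a = pmfExp p1 :=
    (pmf_integral_finset p1 hs1 measurable_id').symm
  have hE2 : ∑ b ∈ s2, (p2 b).toReal * b = pmfExp p2 :=
    (pmf_integral_finset p2 hs2 measurable_id').symm
  have hM1 : ∑ a ∈ s1, (p1 a).toReal * a^2 = ∫ x, x^2 ∂p1.toMeasure :=
    (pmf_integral_finset p1 hs1 (measurable_id'.pow_const 2)).symm
  have hM2 : ∑ b ∈ s2, (p2 b).toReal * b^2 = ∫ x, x^2 ∂p2.toMeasure :=
    (pmf_integral_finset p2 hs2 (measurable_id'.pow_const 2)).symm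
  have hnn1 : ∀ a ∈ s1, (0:ℝ) ≤ (p1 a).toReal := fun a _ => ENNReal.toReal_nonneg
  have hnn2 : ∀ b ∈ s2, (0:ℝ) ≤ (p2 b).toReal := fun b _ => ENNReal.toReal_nonneg
  -- generic double-integral formula
  have hbind : ∀ {f : ℝ → ℝ}, Measurable f →
      ∫ x, f x ∂(p1.bind fun a => p2.bind fun b => roundPMF δ (a + b)).toMeasure
        = ∑ a ∈ s1, (p1 a).toReal *
            ∑ b ∈ s2, (p2 b).toReal * ∫ x, f x ∂(roundPMF δ (a+b)).toMeasure := by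
    intro f hf
    rw [pmf_integral_bind p1 _ hs1 hTa hf]
    refine Finset.sum_congr rfl fun a ha => ?_
    rw [pmf_integral_bind p2 _ hs2 (fun b hb => hpair a ha b hb) hf]
  have hy1 : ∀ a ∈ s1, ∀ b ∈ s2, (1:ℝ) ≤ a + b := fun a ha b hb => by
    have := h1le a ha; have := h2le b hb; linarith
  -- Expectation
  have hExp : pmfExp (p1.bind fun a => p2.bind fun b => roundPMF δ (a + b)) =
      pmfExp p1 + pmfExp p2 := by
    rw [pmfExp, hbind measurable_id']
    have hin : ∀ a ∈ s1, ∑ b ∈ s2, (p2 b).toReal * ∫ x, x ∂(roundPMF δ (a+b)).toMeasure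
        = a + pmfExp p2 := by
      intro a ha
      calc ∑ b ∈ s2, (p2 b).toReal * ∫ x, x ∂(roundPMF δ (a+b)).toMeasure
          = ∑ b ∈ s2, ((p2 b).toReal * a + (p2 b).toReal * b) := by
            refine Finset.sum_congr rfl fun b hb => ?_
            rw [roundPMF_exp hδ (hy1 a ha b hb)]; ring
        _ = (∑ b ∈ s2, (p2 b).toReal) * a + ∑ b ∈ s2, (p2 b).toReal * b := by
            rw [Finset.sum_add_distrib, Finset.sum_mul]
        _ = a + pmfExp p2 := by rw [hone2, hE2, one_mul]
    calc ∑ a ∈ s1, (p1 a).toReal *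
          ∑ b ∈ s2, (p2 b).toReal * ∫ x, x ∂(roundPMF δ (a+b)).toMeasure
        = ∑ a ∈ s1, ((p1 a).toReal * a + (p1 a).toReal * pmfExp p2) := by
          refine Finset.sum_congr rfl fun a ha => ?_
          rw [hin a ha]; ring
      _ = ∑ a ∈ s1, (p1 a).toReal * a + (∑ a ∈ s1, (p1 a).toReal) * pmfExp p2 := by
          rw [Finset.sum_add_distrib, Finset.sum_mul]
      _ = pmfExp p1 + pmfExp p2 := by rw [hone1, hE1, one_mul]
  refine ⟨hExp, ?_⟩
  -- Variance
  have hVbind := pmf_var_eq _ hTsupp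
  rw [hVbind, hExp]
  have hsq : ∫ x, x^2 ∂(p1.bind fun a => p2.bind fun b => roundPMF δ (a + b)).toMeasure
      ≤ (∫ x, x^2 ∂p1.toMeasure) + (∫ x, x^2 ∂p2.toMeasure)
        + 2 * pmfExp p1 * pmfExp p2 + δ * pmfExp p1 * pmfExp p2 := by
    rw [hbind (measurable_id'.pow_const 2)]
    have hstep : ∀ a ∈ s1, ∑ b ∈ s2, (p2 b).toReal * ∫ x, x^2 ∂(roundPMF δ (a+b)).toMeasure
        ≤ a^2 + 2 * a * pmfExp p2 + (∫ x, x^2 ∂p2.toMeasure) + δ * a * pmfExp p2 := by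
      intro a ha
      have hle : ∑ b ∈ s2, (p2 b).toReal * ∫ x, x^2 ∂(roundPMF δ (a+b)).toMeasure
          ≤ ∑ b ∈ s2, (p2 b).toReal * ((a+b)^2 + δ * a * b) := by
        refine Finset.sum_le_sum fun b hb => ?_
        refine mul_le_mul_of_nonneg_left ?_ (hnn2 b hb)
        rw [roundPMF_sq hδ (hy1 a ha b hb)]
        have hk := key hδ (hmem1 a ha) (hmem2 b hb)
        linarith
      refine le_trans hle (le_of_eq ?_)
      calc ∑ b ∈ s2, (p2 b).toReal * ((a+b)^2 + δ * a * b)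
          = ∑ b ∈ s2, ((p2 b).toReal * (a^2) + (2*a + δ*a) * ((p2 b).toReal * b)
              + (p2 b).toReal * b^2) := by
            refine Finset.sum_congr rfl fun b hb => ?_
            ring
        _ = (∑ b ∈ s2, (p2 b).toReal) * a^2 + (2*a + δ*a) * (∑ b ∈ s2, (p2 b).toReal * b)
              + ∑ b ∈ s2, (p2 b).toReal * b^2 := by
            rw [Finset.sum_add_distrib, Finset.sum_add_distrib, Finset.sum_mul,
              Finset.mul_sum]
        _ = a^2 + 2 * a * pmfExp p2 + (∫ x, x^2 ∂p2.toMeasure) + δ * a * pmfExp p2 := by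
            rw [hone2, hE2, hM2]; ring
    have hle2 : ∑ a ∈ s1, (p1 a).toReal *
          ∑ b ∈ s2, (p2 b).toReal * ∫ x, x^2 ∂(roundPMF δ (a+b)).toMeasure
        ≤ ∑ a ∈ s1, (p1 a).toReal *
          (a^2 + 2 * a * pmfExp p2 + (∫ x, x^2 ∂p2.toMeasure) + δ * a * pmfExp p2) :=
      Finset.sum_le_sum fun a ha => mul_le_mul_of_nonneg_left (hstep a ha) (hnn1 a ha)
    refine le_trans hle2 (le_of_eq ?_)
    calc ∑ a ∈ s1, (p1 a).toReal *
          (a^2 + 2 * a * pmfExp p2 + (∫ x, x^2 ∂p2.toMeasure) + δ * a * pmfExp p2)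
        = ∑ a ∈ s1, ((p1 a).toReal * a^2
            + (2 * pmfExp p2 + δ * pmfExp p2) * ((p1 a).toReal * a)
            + (p1 a).toReal * (∫ x, x^2 ∂p2.toMeasure)) := by
          refine Finset.sum_congr rfl fun a ha => ?_
          ring
      _ = (∑ a ∈ s1, (p1 a).toReal * a^2)
            + (2 * pmfExp p2 + δ * pmfExp p2) * (∑ a ∈ s1, (p1 a).toReal * a)
            + (∑ a ∈ s1, (p1 a).toReal) * (∫ x, x^2 ∂p2.toMeasure) := by
          rw [Finset.sum_add_distrib, Finset.sum_add_distrib, Finset.mul_sum,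
            Finset.sum_mul]
      _ = (∫ x, x^2 ∂p1.toMeasure) + (∫ x, x^2 ∂p2.toMeasure)
            + 2 * pmfExp p1 * pmfExp p2 + δ * pmfExp p1 * pmfExp p2 := by
          rw [hone1, hE1, hM1]; ring
  have hv1 := pmf_var_eq p1 hs1
  have hv2 := pmf_var_eq p2 hs2
  rw [hv1, hv2]
  nlinarith [hsq]
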